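/- Let 𝒳 be a nonempty set, n a positive integer, ℓ : [0,1] × {0,1} → ℝ a function that is convex in its first argument, and φ : {0,1}^n × 𝒳^n → ℝ an arbitrary function. Then sup_(x_1∈𝒳) inf_(p̂_1∈[0,1]) sup_(y_1∈{0,1}) ⋯ sup_(x_n∈𝒳) inf_(p̂_n∈[0,1]) sup_(y_n∈{0,1}) [Σ_(t=1)^n ℓ(p̂_t, y_t) − φ((y_1,…,y_n), (x_1,…,x_n))] = sup_𝐱 inf_(p̂_1∈[0,1]) sup_(y_1∈{0,1}) ⋯ inf_(p̂_n∈[0,1]) sup_(y_n∈{0,1}) [Σ_(t=1)^n ℓ(p̂_t, y_t) − φ((y_1,…,y_n), (x_1, x_2(y_1), …, x_n(y_1,…,y_(n−1))))], where the outer supremum on the right-hand side ranges over all depth-n 𝒳-valued binary trees 𝐱 and both alternated values are interpreted in the extended reals. -/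

import Mathlib

/-- The n-round alternated value sup_{x_t ∈ X} inf_{p̂_t ∈ [0,1]} sup_{y_t ∈ {0,1}} of a payoff
depending on the sequences (x_1,…,x_n), (p̂_1,…,p̂_n), (y_1,…,y_n). -/
noncomputable def gameVal {X : Type*} :
    (n : ℕ) → ((Fin n → X) → (Fin n → ℝ) → (Fin n → Bool) → EReal) → EReal
  | 0, payoff => payoff Fin.elim0 Fin.elim0 Fin.elim0
  | n + 1, payoff =>
      ⨆ x : X, ⨅ p : Set.Icc (0 : ℝ) 1, ⨆ y : Bool,
        gameVal n fun xs ps ys => payoff (Fin.cons x xs) (Fin.cons (p : ℝ) ps) (Fin.cons y ys)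

/-- The n-round alternated value inf_{p̂_t ∈ [0,1]} sup_{y_t ∈ {0,1}} of a payoff depending on
the sequences (p̂_1,…,p̂_n), (y_1,…,y_n) (no side-information player). -/
noncomputable def predVal :
    (n : ℕ) → ((Fin n → ℝ) → (Fin n → Bool) → EReal) → EReal
  | 0, payoff => payoff Fin.elim0 Fin.elim0
  | n + 1, payoff =>
      ⨅ p : Set.Icc (0 : ℝ) 1, ⨆ y : Bool,
        predVal n fun ps ys => payoff (Fin.cons (p : ℝ) ps) (Fin.cons y ys)


private lemma ereal_cancel₁ (r : ℝ) (x : EReal) :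
    ((-r : ℝ) : EReal) + ((r : EReal) + x) = x := by
  induction x using EReal.rec with
  | bot => simp
  | coe y => rw [← EReal.coe_add, ← EReal.coe_add]; norm_num
  | top =>
      rw [EReal.add_top_of_ne_bot (EReal.coe_ne_bot r),
        EReal.add_top_of_ne_bot (EReal.coe_ne_bot (-r))]

private lemma ereal_cancel₂ (r : ℝ) (x : EReal) :
    (r : EReal) + (((-r : ℝ) : EReal) + x) = x := by
  have := ereal_cancel₁ (-r) x
  rwa [neg_neg] at this

private lemma ereal_add_iSup {ι : Sort*} (r : ℝ) (f : ι → EReal) :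
    (r : EReal) + ⨆ i, f i = ⨆ i, ((r : EReal) + f i) := by
  refine le_antisymm ?_ (iSup_le fun i => add_le_add_right (le_iSup f i) _)
  have h : (⨆ i, f i) ≤ ((-r : ℝ) : EReal) + ⨆ i, ((r : EReal) + f i) := by
    refine iSup_le fun i => ?_
    calc f i = ((-r:ℝ):EReal) + ((r:EReal) + f i) := (ereal_cancel₁ r (f i)).symm
      _ ≤ ((-r:ℝ):EReal) + ⨆ i, ((r : EReal) + f i) :=
        add_le_add_right (le_iSup (fun i => (r:EReal) + f i) i) _
  calc (r : EReal) + ⨆ i, f i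
      ≤ (r : EReal) + (((-r : ℝ) : EReal) + ⨆ i, ((r : EReal) + f i)) := add_le_add_right h _
    _ = ⨆ i, ((r : EReal) + f i) := ereal_cancel₂ r _

private lemma ereal_add_iInf {ι : Sort*} (r : ℝ) (f : ι → EReal) :
    (r : EReal) + ⨅ i, f i = ⨅ i, ((r : EReal) + f i) := by
  refine le_antisymm (le_iInf fun i => add_le_add_right (iInf_le f i) _) ?_
  have h : ((-r : ℝ) : EReal) + ⨅ i, ((r : EReal) + f i) ≤ ⨅ i, f i := by
    refine le_iInf fun i => ?_
    calc ((-r:ℝ):EReal) + ⨅ i, ((r : EReal) + f i)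
        ≤ ((-r:ℝ):EReal) + ((r:EReal) + f i) :=
          add_le_add_right (iInf_le (fun i => (r:EReal) + f i) i) _
      _ = f i := ereal_cancel₁ r (f i)
  calc ⨅ i, ((r : EReal) + f i)
      = (r : EReal) + (((-r : ℝ) : EReal) + ⨅ i, ((r : EReal) + f i)) := (ereal_cancel₂ r _).symm
    _ ≤ (r : EReal) + ⨅ i, f i := add_le_add_right h _



private lemma key_exchange {ι : Type*} [Nonempty ι] (f : Bool → Set.Icc (0:ℝ) 1 → ℝ)
    (m : Bool → ℝ) (hm : ∀ y p, m y ≤ f y p) (c : Bool → ι → EReal) :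
    (⨅ p : Set.Icc (0:ℝ) 1, ⨆ y : Bool, ((f y p : EReal) + ⨆ t, c y t)) =
      ⨆ T : Bool → ι, ⨅ p : Set.Icc (0:ℝ) 1, ⨆ y : Bool, ((f y p : EReal) + c y (T y)) := by
  refine le_antisymm ?_ (iSup_le fun T => iInf_mono fun p => iSup_mono fun y =>
    add_le_add_right (le_iSup (c y) (T y)) _)
  refine le_of_forall_lt_imp_le_of_dense fun a ha => ?_
  induction a using EReal.rec with
  | bot => exact bot_le
  | top => exact absurd ha not_top_lt
  | coe a =>
  refine le_of_forall_lt_imp_le_of_dense fun b hb => ?_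
  induction b using EReal.rec with
  | bot => exact bot_le
  | top => exact absurd hb not_top_lt
  | coe b =>
  have hba : b < a := by exact_mod_cast hb
  -- choose a near-optimal subtree for each y
  have claim : ∀ y : Bool, ∃ t : ι, ∀ p : Set.Icc (0:ℝ) 1,
      (a : EReal) < (f y p : EReal) + (⨆ t', c y t') → ((b:ℝ):EReal) ≤ (f y p : EReal) + c y t := by
    intro y
    rcases eq_or_ne (⨆ t', c y t') ⊤ with hC | hC
    · obtain ⟨t, ht⟩ := lt_iSup_iff.mp (show ((a - m y : ℝ):EReal) < ⨆ t', c y t' from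
        hC ▸ EReal.coe_lt_top (a - m y))
      refine ⟨t, fun p _ => ?_⟩
      calc ((b:ℝ):EReal) ≤ ((m y + (a - m y) : ℝ) : EReal) := by
            apply EReal.coe_le_coe_iff.mpr; linarith
        _ = ((m y : ℝ):EReal) + ((a - m y : ℝ):EReal) := EReal.coe_add _ _
        _ ≤ (f y p : EReal) + c y t :=
            add_le_add (EReal.coe_le_coe_iff.mpr (hm y p)) ht.le
    · rcases eq_or_ne (⨆ t', c y t') ⊥ with hC' | hC'
      · refine ⟨Classical.arbitrary ι, fun p hp => absurd hp ?_⟩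
        rw [hC', EReal.add_bot]
        exact not_lt_bot
      · obtain ⟨r, hr⟩ : ∃ r : ℝ, (⨆ t', c y t') = (r:ℝ) :=
          ⟨(⨆ t', c y t').toReal, (EReal.coe_toReal hC hC').symm⟩
        obtain ⟨t, ht⟩ := lt_iSup_iff.mp (show ((r - (a - b) : ℝ):EReal) < ⨆ t', c y t' by
          rw [hr]; exact EReal.coe_lt_coe_iff.mpr (by linarith))
        refine ⟨t, fun p hp => ?_⟩
        rw [hr, ← EReal.coe_add, EReal.coe_lt_coe_iff] at hp
        calc ((b:ℝ):EReal) ≤ ((f y p + (r - (a - b)) : ℝ) : EReal) :=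
              EReal.coe_le_coe_iff.mpr (by linarith)
          _ = (f y p : EReal) + ((r - (a - b):ℝ):EReal) := EReal.coe_add _ _
          _ ≤ (f y p : EReal) + c y t := add_le_add_right ht.le _
  choose T hT using claim
  refine le_trans ?_ (le_iSup _ T)
  refine le_iInf fun p => ?_
  have hap : (a:EReal) < ⨆ y : Bool, ((f y p : EReal) + ⨆ t', c y t') :=
    lt_of_lt_of_le ha (iInf_le _ p)
  obtain ⟨y, hy⟩ := lt_iSup_iff.mp hap
  exact le_trans (hT y p hy) (le_iSup (fun y => (f y p : EReal) + c y (T y)) y)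

private lemma convex_lb {f : ℝ → ℝ} (hf : ConvexOn ℝ (Set.Icc 0 1) f) :
    ∃ m : ℝ, ∀ p ∈ Set.Icc (0:ℝ) 1, m ≤ f p := by
  refine ⟨-2 * (|f (1/2)| + |f 0| + |f 1|), ?_⟩
  rintro p ⟨hp0, hp1⟩
  rcases le_total p (1/2) with h | h
  · -- use endpoint 1
    have h1p : (0:ℝ) < 1 - p := by linarith
    set b : ℝ := 1 / (2 * (1 - p)) with hbdef
    have hb0 : 0 < b := by positivity
    have hb1 : b ≤ 1 := by
      rw [hbdef, div_le_one (by linarith)]; linarith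
    have hb2 : 1/2 ≤ b := by
      rw [hbdef, le_div_iff₀ (by linarith)]; linarith
    have key := hf.2 (Set.mem_Icc.mpr ⟨zero_le_one, le_refl (1:ℝ)⟩)
      (Set.mem_Icc.mpr ⟨hp0, hp1⟩) (by linarith : (0:ℝ) ≤ 1 - b) hb0.le (by ring)
    have harg : (1 - b) * (1:ℝ) + b * p = 1/2 := by
      rw [hbdef]
      field_simp
      ring
    simp only [smul_eq_mul] at key; rw [harg] at key
    -- key : f (1/2) ≤ (1-b) * f 1 + b * f p
    have habs : -(|f (1/2)| + |f 1|) ≤ b * f p := by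
      nlinarith [neg_abs_le (f (1/2)), le_abs_self (f 1),
        mul_le_mul_of_nonneg_left (le_abs_self (f 1)) (by linarith : (0:ℝ) ≤ 1 - b),
        abs_nonneg (f 1)]
    rcases le_or_gt 0 (f p) with hfp | hfp
    · nlinarith [abs_nonneg (f (1/2)), abs_nonneg (f 0), abs_nonneg (f 1)]
    · have : b * f p ≤ (1/2) * f p := by nlinarith
      nlinarith [abs_nonneg (f 0)]
  · -- use endpoint 0
    have h1p : (0:ℝ) < p := by linarith
    set b : ℝ := 1 / (2 * p) with hbdef
    have hb0 : 0 < b := by positivity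
    have hb1 : b ≤ 1 := by
      rw [hbdef, div_le_one (by linarith)]; linarith
    have hb2 : 1/2 ≤ b := by
      rw [hbdef, le_div_iff₀ (by linarith)]; linarith
    have key := hf.2 (Set.mem_Icc.mpr ⟨le_refl (0:ℝ), zero_le_one⟩)
      (Set.mem_Icc.mpr ⟨hp0, hp1⟩) (by linarith : (0:ℝ) ≤ 1 - b) hb0.le (by ring)
    have harg : (1 - b) * (0:ℝ) + b * p = 1/2 := by
      rw [hbdef]
      field_simp
      ring
    simp only [smul_eq_mul] at key; rw [harg] at key
    have habs : -(|f (1/2)| + |f 0|) ≤ b * f p := by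
      nlinarith [neg_abs_le (f (1/2)), le_abs_self (f 0),
        mul_le_mul_of_nonneg_left (le_abs_self (f 0)) (by linarith : (0:ℝ) ≤ 1 - b),
        abs_nonneg (f 0)]
    rcases le_or_gt 0 (f p) with hfp | hfp
    · nlinarith [abs_nonneg (f (1/2)), abs_nonneg (f 0), abs_nonneg (f 1)]
    · have : b * f p ≤ (1/2) * f p := by nlinarith
      nlinarith [abs_nonneg (f 1)]

private lemma predVal_add (n : ℕ) (r : ℝ) (f : (Fin n → ℝ) → (Fin n → Bool) → EReal) :
    predVal n (fun ps ys => (r : EReal) + f ps ys) = (r : EReal) + predVal n f := by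
  induction n with
  | zero => rfl
  | succ n ih =>
      simp only [predVal]
      simp only [ih]
      simp only [← ereal_add_iSup, ← ereal_add_iInf]

private lemma main_ind {X : Type*} [Nonempty X] (ℓ : ℝ → Bool → ℝ) (m : Bool → ℝ)
    (hm : ∀ y, ∀ p ∈ Set.Icc (0:ℝ) 1, m y ≤ ℓ p y) :
    ∀ (n : ℕ) (φ : (Fin n → Bool) → (Fin n → X) → ℝ),
    gameVal n (fun xs ps ys => (((∑ t, ℓ (ps t) (ys t)) - φ ys xs : ℝ) : EReal)) =
      ⨆ x : List Bool → X,
        predVal n (fun ps ys =>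
          (((∑ t, ℓ (ps t) (ys t)) -
              φ ys (fun t => x ((List.ofFn ys).take t.val)) : ℝ) : EReal)) := by
  intro n
  induction n with
  | zero =>
      intro φ
      have h : ∀ x : List Bool → X,
          (fun t : Fin 0 => x ((List.ofFn (Fin.elim0 : Fin 0 → Bool)).take t.val)) =
            (Fin.elim0 : Fin 0 → X) := fun x => funext fun t => t.elim0
      simp only [gameVal, predVal]
      rw [show (⨆ x : List Bool → X,
          ((((∑ t : Fin 0, ℓ (Fin.elim0 t) (Fin.elim0 t)) -
            φ Fin.elim0 (fun t => x ((List.ofFn (Fin.elim0 : Fin 0 → Bool)).take t.val)) : ℝ)) : EReal))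
        = ⨆ _ : List Bool → X,
          ((((∑ t : Fin 0, ℓ (Fin.elim0 t) (Fin.elim0 t)) - φ Fin.elim0 Fin.elim0 : ℝ)) : EReal)
        from iSup_congr fun x => by rw [h x]]
      exact (iSup_const).symm
  | succ n ih =>
      intro φ
      -- the residual value of a subtree
      set c : X → Bool → (List Bool → X) → EReal := fun x0 y x =>
        predVal n (fun ps ys =>
          (((∑ t, ℓ (ps t) (ys t)) -
            φ (Fin.cons y ys) (Fin.cons x0 (fun t => x ((List.ofFn ys).take t.val))) : ℝ) : EReal))
        with hc
      have hsum : ∀ (p : ℝ) (ps : Fin n → ℝ) (y : Bool) (ys : Fin n → Bool),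
          (∑ t : Fin (n+1), ℓ ((Fin.cons p ps : Fin (n+1) → ℝ) t) ((Fin.cons y ys : Fin (n+1) → Bool) t)) =
            ℓ p y + ∑ t : Fin n, ℓ (ps t) (ys t) := by
        intro p ps y ys
        simp [Fin.sum_univ_succ]
      -- LHS computation
      have hstep : ∀ (x0 : X) (p : Set.Icc (0:ℝ) 1) (y : Bool),
          gameVal n (fun xs ps ys =>
            (((∑ t : Fin (n+1), ℓ ((Fin.cons (p:ℝ) ps : Fin (n+1) → ℝ) t) ((Fin.cons y ys : Fin (n+1) → Bool) t)) -
              φ (Fin.cons y ys) (Fin.cons x0 xs) : ℝ) : EReal)) =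
          ⨆ x : List Bool → X, ((ℓ (p:ℝ) y : EReal) + c x0 y x) := by
        intro x0 p y
        have e1 : (fun (xs : Fin n → X) (ps : Fin n → ℝ) (ys : Fin n → Bool) =>
            ((((∑ t : Fin (n+1), ℓ ((Fin.cons (p:ℝ) ps : Fin (n+1) → ℝ) t) ((Fin.cons y ys : Fin (n+1) → Bool) t)) -
              φ (Fin.cons y ys) (Fin.cons x0 xs) : ℝ)) : EReal)) =
            (fun xs ps ys =>
            ((((∑ t : Fin n, ℓ (ps t) (ys t)) -
              ((fun ys xs => φ (Fin.cons y ys) (Fin.cons x0 xs) - ℓ (p:ℝ) y) ys xs) : ℝ)) : EReal)) := by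
          funext xs ps ys
          rw [hsum]
          norm_cast
          ring
        rw [e1, ih]
        refine iSup_congr fun x => ?_
        rw [hc]
        rw [← predVal_add]
        congr 1
        funext ps ys
        rw [← EReal.coe_add]
        norm_cast
        ring
      -- unfolding + rewriting
      simp only [gameVal]
      rw [show (⨆ x0 : X, ⨅ p : Set.Icc (0:ℝ) 1, ⨆ y : Bool,
          gameVal n (fun xs ps ys =>
            (((∑ t : Fin (n+1), ℓ ((Fin.cons (p:ℝ) ps : Fin (n+1) → ℝ) t) ((Fin.cons y ys : Fin (n+1) → Bool) t)) -
              φ (Fin.cons y ys) (Fin.cons x0 xs) : ℝ) : EReal)))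
        = ⨆ x0 : X, ⨅ p : Set.Icc (0:ℝ) 1, ⨆ y : Bool,
            ((ℓ (p:ℝ) y : EReal) + ⨆ x : List Bool → X, c x0 y x) from
        iSup_congr fun x0 => iInf_congr fun p => iSup_congr fun y => by
          rw [hstep x0 p y, ← ereal_add_iSup]]
      -- apply the minimax exchange for each x0
      have hkey : ∀ x0 : X,
          (⨅ p : Set.Icc (0:ℝ) 1, ⨆ y : Bool,
            ((ℓ (p:ℝ) y : EReal) + ⨆ x : List Bool → X, c x0 y x)) =
          ⨆ T : Bool → (List Bool → X), ⨅ p : Set.Icc (0:ℝ) 1, ⨆ y : Bool,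
            ((ℓ (p:ℝ) y : EReal) + c x0 y (T y)) := fun x0 =>
        key_exchange (fun y p => ℓ (p:ℝ) y) m (fun y p => hm y (p:ℝ) p.2) (c x0)
      simp only [hkey]
      -- RHS computation
      simp only [predVal]
      have htree : ∀ (x : List Bool → X) (y : Bool) (ys : Fin n → Bool),
          (fun t : Fin (n+1) => x ((List.ofFn (Fin.cons y ys)).take t.val)) =
            Fin.cons (x []) (fun s : Fin n => x (y :: (List.ofFn ys).take s.val)) := by
        intro x y ys
        funext t
        refine Fin.cases ?_ ?_ t
        · simp
        · intro s
          simp [List.ofFn_succ]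
      have hrhs : ∀ (x : List Bool → X) (p : Set.Icc (0:ℝ) 1) (y : Bool),
          predVal n (fun ps ys =>
            (((∑ t : Fin (n+1), ℓ ((Fin.cons (p:ℝ) ps : Fin (n+1) → ℝ) t) ((Fin.cons y ys : Fin (n+1) → Bool) t)) -
              φ (Fin.cons y ys)
                (fun t : Fin (n+1) => x ((List.ofFn (Fin.cons y ys)).take t.val)) : ℝ) : EReal)) =
          (ℓ (p:ℝ) y : EReal) + c (x []) y (fun l => x (y :: l)) := by
        intro x p y
        rw [hc]
        rw [← predVal_add]
        congr 1
        funext ps ys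
        rw [htree, hsum, ← EReal.coe_add]
        norm_cast
        ring
      rw [show (⨆ x : List Bool → X, ⨅ p : Set.Icc (0:ℝ) 1, ⨆ y : Bool,
          predVal n (fun ps ys =>
            (((∑ t : Fin (n+1), ℓ ((Fin.cons (p:ℝ) ps : Fin (n+1) → ℝ) t) ((Fin.cons y ys : Fin (n+1) → Bool) t)) -
              φ (Fin.cons y ys)
                (fun t : Fin (n+1) => x ((List.ofFn (Fin.cons y ys)).take t.val)) : ℝ) : EReal)))
        = ⨆ x : List Bool → X, ⨅ p : Set.Icc (0:ℝ) 1, ⨆ y : Bool,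
            ((ℓ (p:ℝ) y : EReal) + c (x []) y (fun l => x (y :: l))) from
        iSup_congr fun x => iInf_congr fun p => iSup_congr fun y => hrhs x p y]
      -- pack/unpack the tree
      refine le_antisymm ?_ ?_
      · refine iSup_le fun x0 => iSup_le fun T => ?_
        exact le_iSup (fun x : List Bool → X => ⨅ p : Set.Icc (0:ℝ) 1, ⨆ y : Bool,
            ((ℓ (p:ℝ) y : EReal) + c (x []) y (fun l => x (y :: l))))
          (fun l => match l with | [] => x0 | y :: l => T y l)
      · refine iSup_le fun x => ?_
        refine le_iSup_of_le (x []) (le_iSup_of_le (fun y l => x (y :: l)) le_rfl)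

/-- for a nonempty set 𝒳, a loss ℓ convex in its first argument on [0,1], and an
arbitrary φ : {0,1}^n × 𝒳^n → ℝ, the fully adaptive alternated value
sup_x inf_p̂ sup_y ⋯ [Σ_t ℓ(p̂_t,y_t) − φ(y_{1:n}, x_{1:n})] equals the supremum, over all
depth-n 𝒳-valued binary trees 𝐱 (encoded as functions on bit-strings, the round-t context
being 𝐱 applied to the first t−1 outcome bits), of the alternated value
inf_p̂ sup_y ⋯ [Σ_t ℓ(p̂_t,y_t) − φ(y_{1:n}, (x_1, x_2(y_1), …, x_n(y_{1:n−1})))]. -/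
theorem stmt5 {X : Type*} [Nonempty X] (n : ℕ) (hn : 0 < n)
    (ℓ : ℝ → Bool → ℝ) (hℓ : ∀ y, ConvexOn ℝ (Set.Icc (0 : ℝ) 1) (fun p => ℓ p y))
    (φ : (Fin n → Bool) → (Fin n → X) → ℝ) :
    gameVal n (fun xs ps ys => (((∑ t, ℓ (ps t) (ys t)) - φ ys xs : ℝ) : EReal)) =
      ⨆ x : List Bool → X,
        predVal n (fun ps ys =>
          (((∑ t, ℓ (ps t) (ys t)) -
              φ ys (fun t => x ((List.ofFn ys).take t.val)) : ℝ) : EReal)) := by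
  obtain ⟨m0, hm0⟩ := convex_lb (hℓ false)
  obtain ⟨m1, hm1⟩ := convex_lb (hℓ true)
  refine main_ind ℓ (fun y => bif y then m1 else m0) ?_ n φ
  intro y p hp
  cases y
  · exact hm0 p hp
  · exact hm1 p hp
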